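/- Reversibility of the generator: Let N ≥ 2, d ≥ 1, C_+ > 0, C_- > 0, C_E ≥ 0, C_A > 0, C_C > 0, and fix ρ ∈ (-1,1). Let L_N be the generator on functions f : {-1,0,1}^{T^d_N} → R given by L_N f(η) = Σ_b L_b f(η), the sum over all ordered pairs b of nearest-neighbour sites of T^d_N = (Z/NZ)^d. Then L_N is self-adjoint in L²(ν_ρ): for all functions f, g, Σ_η ν_ρ({η})·(L_N f)(η)·g(η) = Σ_η ν_ρ({η})·f(η)·(L_N g)(η). -/

import Mathlib

open Finset

/-- Spin value of a configuration at a site: the `Fin 3` values `0, 1, 2`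
code the spins `-1, 0, 1` respectively. -/
def spin {V : Type*} (η : V → Fin 3) (x : V) : ℤ := (η x : ℤ) - 1

/-- The configuration `η^{(x,y)}`: swap the values at `x` and `y` in the three exchange cases,
annihilate a `(+,-)` pair, or create a `(-,+)` pair from two empty sites. -/
def cfgFlip {V : Type*} [DecidableEq V] (x y : V) (η : V → Fin 3) : V → Fin 3 := fun z =>
  if z = x then (if η x = 2 ∧ η y = 0 then 1 else if η x = 1 ∧ η y = 1 then 0 else η y)
  else if z = y then (if η x = 2 ∧ η y = 0 then 1 else if η x = 1 ∧ η y = 1 then 2 else η x)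
  else η z

/-- The jump rate `c_{(x,y)}(η)`. -/
def rate {V : Type*} (Cp Cm CE CA CC : ℝ) (x y : V) (η : V → Fin 3) : ℝ :=
  if η x = 2 ∧ η y = 1 then Cp
  else if η x = 1 ∧ η y = 0 then Cm
  else if η x = 0 ∧ η y = 2 then CE
  else if η x = 2 ∧ η y = 0 then CA
  else if η x = 1 ∧ η y = 1 then CC
  else 0

/-- The single-bond generator `L_{(x,y)} f (η) = c_{(x,y)}(η) (f(η^{(x,y)}) - f(η))`. -/
noncomputable def Lbond {V : Type*} [DecidableEq V] (Cp Cm CE CA CC : ℝ) (x y : V)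
    (f : (V → Fin 3) → ℝ) (η : V → Fin 3) : ℝ :=
  rate Cp Cm CE CA CC x y η * (f (cfgFlip x y η) - f η)

/-- `Φ(ρ)`, the probability of an empty site, with `β = C_C / C_A`. -/
noncomputable def Phi (β ρ : ℝ) : ℝ :=
  if β = 1 / 4 then (1 - ρ ^ 2) / 2
  else (1 - Real.sqrt (4 * β + ρ ^ 2 - 4 * β * ρ ^ 2)) / (1 - 4 * β)

/-- The single-site marginal weight of `ν_ρ`. -/
noncomputable def wgt (β ρ : ℝ) : Fin 3 → ℝ := fun v =>
  if v = 0 then (1 - Phi β ρ - ρ) / 2 else if v = 1 then Phi β ρ else (1 - Phi β ρ + ρ) / 2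

/-- The product measure `ν_ρ` (as a weight function on configurations on a finite site set). -/
noncomputable def nuProd {V : Type*} [Fintype V] (β ρ : ℝ) (η : V → Fin 3) : ℝ :=
  ∏ x, wgt β ρ (η x)

/-- `x` and `y` are nearest neighbours on the discrete torus `(ℤ/Nℤ)^d`. -/
def torusNbr {d N : ℕ} (x y : Fin d → ZMod N) : Prop :=
  ∃ i : Fin d, y = x + Pi.single i 1 ∨ y = x - Pi.single i 1

instance {d N : ℕ} (x y : Fin d → ZMod N) : Decidable (torusNbr x y) := by
  unfold torusNbr; infer_instance

/-- The full generator `L_N`: sum of `L_b` over all ordered nearest-neighbour bonds of the torus. -/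
noncomputable def LTorus (d N : ℕ) [NeZero N] (Cp Cm CE CA CC : ℝ)
    (f : ((Fin d → ZMod N) → Fin 3) → ℝ) (η : (Fin d → ZMod N) → Fin 3) : ℝ :=
  ∑ x : Fin d → ZMod N, ∑ y : Fin d → ZMod N,
    if torusNbr x y then Lbond Cp Cm CE CA CC x y f η else 0


-- ===== auxiliary lemmas =====

lemma fin3cases : ∀ a : Fin 3, a = 0 ∨ a = 1 ∨ a = 2 := by decide

lemma fin3_a21 : ∀ a : Fin 3, a + 2 + 1 = a := by decide
lemma fin3_a12 : ∀ a : Fin 3, a + 1 + 2 = a := by decide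

/-- The "decrement at x, increment at y (mod 3)" map; agrees with `cfgFlip` on active configs. -/
def sig3 {V : Type*} [DecidableEq V] (x y : V) (η : V → Fin 3) : V → Fin 3 :=
  Function.update (Function.update η x (η x + 2)) y (η y + 1)

lemma sig3_x {V : Type*} [DecidableEq V] {x y : V} (hxy : x ≠ y) (η : V → Fin 3) :
    sig3 x y η x = η x + 2 := by
  simp [sig3, Function.update_of_ne hxy]

lemma sig3_y {V : Type*} [DecidableEq V] (x y : V) (η : V → Fin 3) :
    sig3 x y η y = η y + 1 := by
  simp [sig3]

lemma sig3_z {V : Type*} [DecidableEq V] {x y z : V} (hzx : z ≠ x) (hzy : z ≠ y)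
    (η : V → Fin 3) : sig3 x y η z = η z := by
  simp [sig3, Function.update_of_ne hzx, Function.update_of_ne hzy]

lemma sig3_sig3 {V : Type*} [DecidableEq V] {x y : V} (hxy : x ≠ y) (η : V → Fin 3) :
    sig3 y x (sig3 x y η) = η := by
  funext z
  by_cases hzx : z = x
  · subst hzx
    rw [sig3_y, sig3_x hxy, fin3_a21]
  · by_cases hzy : z = y
    · subst hzy
      rw [sig3_x (Ne.symm hxy), sig3_y, fin3_a12]
    · rw [sig3_z hzy hzx, sig3_z hzx hzy]

lemma flip_eq_sig3 {V : Type*} [DecidableEq V] {Cp Cm CE CA CC : ℝ} {x y : V}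
    (hxy : x ≠ y) {η : V → Fin 3} (h : rate Cp Cm CE CA CC x y η ≠ 0) :
    cfgFlip x y η = sig3 x y η := by
  have hflip : ∀ z, cfgFlip x y η z = sig3 x y η z := by
    intro z
    by_cases hzx : z = x
    · subst hzx
      rw [sig3_x hxy]
      rcases fin3cases (η z) with ha | ha | ha <;> rcases fin3cases (η y) with hb | hb | hb <;>
        simp [rate, ha, hb] at h ⊢ <;> simp [cfgFlip, ha, hb]
    · by_cases hzy : z = y
      · subst hzy
        rw [sig3_y]
        rcases fin3cases (η x) with ha | ha | ha <;> rcases fin3cases (η z) with hb | hb | hb <;>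
          simp [rate, ha, hb] at h ⊢ <;> simp [cfgFlip, ha, hb, Ne.symm hxy]
      · rw [sig3_z hzx hzy]
        simp [cfgFlip, hzx, hzy]
  funext z; exact hflip z

lemma Lbond_sig3 {V : Type*} [DecidableEq V] (Cp Cm CE CA CC : ℝ) {x y : V}
    (hxy : x ≠ y) (F : (V → Fin 3) → ℝ) (η : V → Fin 3) :
    Lbond Cp Cm CE CA CC x y F η
      = rate Cp Cm CE CA CC x y η * (F (sig3 x y η) - F η) := by
  by_cases h : rate Cp Cm CE CA CC x y η = 0
  · simp [Lbond, h]
  · rw [Lbond, flip_eq_sig3 hxy h]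

lemma phi_key {β ρ : ℝ} (hβ : 0 < β) (hρ : ρ ^ 2 ≤ 1) :
    (1 - Phi β ρ) ^ 2 - ρ ^ 2 = 4 * β * (Phi β ρ) ^ 2 := by
  unfold Phi
  split_ifs with hb
  · subst hb; ring
  · have hD : 0 ≤ 4 * β + ρ ^ 2 - 4 * β * ρ ^ 2 := by nlinarith
    have hs := Real.sq_sqrt hD
    set s := Real.sqrt (4 * β + ρ ^ 2 - 4 * β * ρ ^ 2) with hsdef
    have h4 : 1 - 4 * β ≠ 0 := fun h => hb (by linarith)
    field_simp
    nlinarith [hs]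

lemma wgt_key {CA CC ρ : ℝ} (hCA : 0 < CA) (hCC : 0 < CC) (hρ : ρ ^ 2 ≤ 1) :
    wgt (CC / CA) ρ 2 * wgt (CC / CA) ρ 0 * CA
      = wgt (CC / CA) ρ 1 * wgt (CC / CA) ρ 1 * CC := by
  have hβ : 0 < CC / CA := div_pos hCC hCA
  have h := phi_key hβ hρ
  have hdiv : CC / CA * CA = CC := div_mul_cancel₀ CC (ne_of_gt hCA)
  simp only [wgt]
  simp only [show ((2:Fin 3) = 0) = False by simp, show ((2:Fin 3) = 1) = False by simp,
    show ((0:Fin 3) = 0) = True by simp, show ((1:Fin 3) = 0) = False by simp,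
    show ((1:Fin 3) = 1) = True by simp, if_true, if_false]
  linear_combination (CA / 4) * h + (Phi (CC / CA) ρ) ^ 2 * hdiv

/-- Detailed balance pointwise. -/
lemma db {V : Type*} [Fintype V] [DecidableEq V] {β ρ Cp Cm CE CA CC : ℝ}
    (hw : wgt β ρ 2 * wgt β ρ 0 * CA = wgt β ρ 1 * wgt β ρ 1 * CC)
    {x y : V} (hxy : x ≠ y) (η : V → Fin 3) :
    nuProd β ρ η * rate Cp Cm CE CA CC x y η
      = nuProd β ρ (sig3 x y η) * rate Cp Cm CE CA CC y x (sig3 x y η) := by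
  classical
  have hyx : (y : V) ∈ Finset.univ.erase x :=
    Finset.mem_erase.mpr ⟨Ne.symm hxy, Finset.mem_univ y⟩
  have fact : ∀ ζ : V → Fin 3, nuProd β ρ ζ
      = wgt β ρ (ζ x) * (wgt β ρ (ζ y)
        * ∏ z ∈ (Finset.univ.erase x).erase y, wgt β ρ (ζ z)) := by
    intro ζ
    rw [nuProd, ← Finset.mul_prod_erase Finset.univ _ (Finset.mem_univ x),
        ← Finset.mul_prod_erase _ _ hyx]
  have prods : (∏ z ∈ (Finset.univ.erase x).erase y, wgt β ρ (sig3 x y η z))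
      = ∏ z ∈ (Finset.univ.erase x).erase y, wgt β ρ (η z) := by
    refine Finset.prod_congr rfl fun z hz => ?_
    rw [sig3_z (Finset.mem_erase.mp (Finset.mem_erase.mp hz).2).1
        (Finset.mem_erase.mp hz).1]
  rw [fact η, fact (sig3 x y η), prods, sig3_x hxy, sig3_y]
  set R := ∏ z ∈ (Finset.univ.erase x).erase y, wgt β ρ (η z) with hR
  rcases fin3cases (η x) with ha | ha | ha <;> rcases fin3cases (η y) with hb | hb | hb <;>
    simp [rate, sig3_x hxy, sig3_y, ha, hb]
  all_goals try (left; ring)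
  · linear_combination (-R) * hw
  · linear_combination R * hw

noncomputable def Pterm {V : Type*} [Fintype V] [DecidableEq V]
    (β ρ Cp Cm CE CA CC : ℝ) (x y : V) (F G : (V → Fin 3) → ℝ) : ℝ :=
  ∑ η, nuProd β ρ η * rate Cp Cm CE CA CC x y η * F (sig3 x y η) * G η

noncomputable def Qterm {V : Type*} [Fintype V] [DecidableEq V]
    (β ρ Cp Cm CE CA CC : ℝ) (x y : V) (F G : (V → Fin 3) → ℝ) : ℝ :=
  ∑ η, nuProd β ρ η * rate Cp Cm CE CA CC x y η * F η * G η

lemma Qcomm {V : Type*} [Fintype V] [DecidableEq V]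
    (β ρ Cp Cm CE CA CC : ℝ) (x y : V) (F G : (V → Fin 3) → ℝ) :
    Qterm β ρ Cp Cm CE CA CC x y F G = Qterm β ρ Cp Cm CE CA CC x y G F := by
  unfold Qterm
  exact Finset.sum_congr rfl fun η _ => by ring

lemma bond_split {V : Type*} [Fintype V] [DecidableEq V]
    {β ρ Cp Cm CE CA CC : ℝ} {x y : V} (hxy : x ≠ y) (F G : (V → Fin 3) → ℝ) :
    (∑ η, nuProd β ρ η * Lbond Cp Cm CE CA CC x y F η * G η)
      = Pterm β ρ Cp Cm CE CA CC x y F G - Qterm β ρ Cp Cm CE CA CC x y F G := by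
  rw [Pterm, Qterm, ← Finset.sum_sub_distrib]
  refine Finset.sum_congr rfl fun η _ => ?_
  rw [Lbond_sig3 Cp Cm CE CA CC hxy]
  ring

lemma Pswap {V : Type*} [Fintype V] [DecidableEq V]
    {β ρ Cp Cm CE CA CC : ℝ}
    (hw : wgt β ρ 2 * wgt β ρ 0 * CA = wgt β ρ 1 * wgt β ρ 1 * CC)
    {x y : V} (hxy : x ≠ y) (F G : (V → Fin 3) → ℝ) :
    Pterm β ρ Cp Cm CE CA CC x y F G = Pterm β ρ Cp Cm CE CA CC y x G F := by
  classical
  have hbij : Function.Bijective (sig3 x y : (V → Fin 3) → (V → Fin 3)) :=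
    Function.bijective_iff_has_inverse.mpr
      ⟨sig3 y x, fun η => sig3_sig3 hxy η, fun η => sig3_sig3 (Ne.symm hxy) η⟩
  refine Fintype.sum_bijective (sig3 x y) hbij
    (fun η => nuProd β ρ η * rate Cp Cm CE CA CC x y η * F (sig3 x y η) * G η)
    (fun ξ => nuProd β ρ ξ * rate Cp Cm CE CA CC y x ξ * G (sig3 y x ξ) * F ξ)
    fun η => ?_
  have hd := db (Cp := Cp) (Cm := Cm) (CE := CE) hw hxy η
  rw [sig3_sig3 hxy]
  linear_combination (F (sig3 x y η) * G η) * hd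

lemma torusNbr_symm {d N : ℕ} {x y : Fin d → ZMod N} (h : torusNbr x y) : torusNbr y x := by
  obtain ⟨i, h | h⟩ := h
  · exact ⟨i, Or.inr (by rw [h]; abel)⟩
  · exact ⟨i, Or.inl (by rw [h]; abel)⟩

lemma torusNbr_ne {d N : ℕ} (hN : 2 ≤ N) {x y : Fin d → ZMod N} (h : torusNbr x y) :
    x ≠ y := by
  haveI : Fact (1 < N) := ⟨hN⟩
  obtain ⟨i, h | h⟩ := h <;> intro hxy
  · have h2 : x = x + Pi.single i (1 : ZMod N) := by conv_lhs => rw [hxy, h]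
    have h3 : (Pi.single i (1 : ZMod N) : Fin d → ZMod N) = 0 := left_eq_add.mp h2
    have h4 := congrFun h3 i
    rw [Pi.single_eq_same] at h4
    exact one_ne_zero h4
  · have h2 : x - Pi.single i (1 : ZMod N) = x := by conv_rhs => rw [hxy, h]
    have h3 := sub_eq_self.mp h2
    have h4 := congrFun h3 i
    rw [Pi.single_eq_same] at h4
    exact one_ne_zero h4

/-- the generator `L_N` is self-adjoint in `L²(ν_ρ)`. -/
theorem two_species_generator_self_adjoint
    (N d : ℕ) [NeZero N] (hN : 2 ≤ N) (hd : 1 ≤ d)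
    (Cp Cm CE CA CC : ℝ)
    (hCp : 0 < Cp) (hCm : 0 < Cm) (hCE : 0 ≤ CE) (hCA : 0 < CA) (hCC : 0 < CC)
    (ρ : ℝ) (hρ : ρ ∈ Set.Ioo (-1 : ℝ) 1)
    (f g : ((Fin d → ZMod N) → Fin 3) → ℝ) :
    ∑ η : (Fin d → ZMod N) → Fin 3,
        nuProd (CC / CA) ρ η * LTorus d N Cp Cm CE CA CC f η * g η =
      ∑ η : (Fin d → ZMod N) → Fin 3,
        nuProd (CC / CA) ρ η * f η * LTorus d N Cp Cm CE CA CC g η := by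
  classical
  obtain ⟨hρ1, hρ2⟩ := hρ
  have hρsq : ρ ^ 2 ≤ 1 := by nlinarith
  have hw := wgt_key hCA hCC hρsq
  have expand : ∀ F G : ((Fin d → ZMod N) → Fin 3) → ℝ,
      (∑ η, nuProd (CC / CA) ρ η * LTorus d N Cp Cm CE CA CC F η * G η)
      = ∑ x, ∑ y, if torusNbr x y then
          (∑ η, nuProd (CC / CA) ρ η * Lbond Cp Cm CE CA CC x y F η * G η) else 0 := by
    intro F G
    simp only [LTorus, Finset.mul_sum, Finset.sum_mul, mul_ite, ite_mul, mul_zero, zero_mul]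
    rw [Finset.sum_comm]
    refine Finset.sum_congr rfl fun x _ => ?_
    rw [Finset.sum_comm]
    refine Finset.sum_congr rfl fun y _ => ?_
    by_cases h : torusNbr x y <;> simp [h]
  have comm2 : (∑ η, nuProd (CC / CA) ρ η * f η * LTorus d N Cp Cm CE CA CC g η)
      = ∑ η, nuProd (CC / CA) ρ η * LTorus d N Cp Cm CE CA CC g η * f η :=
    Finset.sum_congr rfl fun η _ => by ring
  rw [expand f g, comm2, expand g f]
  have splitL : ∀ F G : ((Fin d → ZMod N) → Fin 3) → ℝ,
      (∑ x, ∑ y, if torusNbr x y then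
          (∑ η, nuProd (CC / CA) ρ η * Lbond Cp Cm CE CA CC x y F η * G η) else 0)
      = (∑ x, ∑ y, if torusNbr x y then Pterm (CC / CA) ρ Cp Cm CE CA CC x y F G else 0)
        - (∑ x, ∑ y, if torusNbr x y then Qterm (CC / CA) ρ Cp Cm CE CA CC x y F G else 0) := by
    intro F G
    rw [← Finset.sum_sub_distrib]
    refine Finset.sum_congr rfl fun x _ => ?_
    rw [← Finset.sum_sub_distrib]
    refine Finset.sum_congr rfl fun y _ => ?_
    by_cases h : torusNbr x y
    · simp only [h, if_true]
      exact bond_split (torusNbr_ne hN h) F G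
    · simp [h]
  rw [splitL f g, splitL g f]
  have hQ : (∑ x, ∑ y, if torusNbr x y then Qterm (CC / CA) ρ Cp Cm CE CA CC x y f g else 0)
      = ∑ x, ∑ y, if torusNbr x y then Qterm (CC / CA) ρ Cp Cm CE CA CC x y g f else 0 := by
    refine Finset.sum_congr rfl fun x _ => Finset.sum_congr rfl fun y _ => ?_
    rw [Qcomm]
  have hP : (∑ x, ∑ y, if torusNbr x y then Pterm (CC / CA) ρ Cp Cm CE CA CC x y f g else 0)
      = ∑ x, ∑ y, if torusNbr x y then Pterm (CC / CA) ρ Cp Cm CE CA CC x y g f else 0 := by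
    calc (∑ x, ∑ y, if torusNbr x y then Pterm (CC / CA) ρ Cp Cm CE CA CC x y f g else 0)
        = ∑ x, ∑ y, if torusNbr x y then Pterm (CC / CA) ρ Cp Cm CE CA CC y x g f else 0 := by
          refine Finset.sum_congr rfl fun x _ => Finset.sum_congr rfl fun y _ => ?_
          by_cases h : torusNbr x y
          · simp only [h, if_true]; exact Pswap hw (torusNbr_ne hN h) f g
          · simp [h]
      _ = ∑ y, ∑ x, if torusNbr x y then Pterm (CC / CA) ρ Cp Cm CE CA CC y x g f else 0 :=
          Finset.sum_comm
      _ = ∑ x, ∑ y, if torusNbr x y then Pterm (CC / CA) ρ Cp Cm CE CA CC x y g f else 0 := by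
          refine Finset.sum_congr rfl fun x _ => Finset.sum_congr rfl fun y _ => ?_
          by_cases h : torusNbr y x
          · rw [if_pos h, if_pos (torusNbr_symm h)]
          · rw [if_neg h, if_neg (fun hc => h (torusNbr_symm hc))]
  rw [hP, hQ]
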